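/- Let R be a commutative Noetherian ring, M an R-module, and s a non-negative integer. If M is in dimension < s, then the set (Ass_R M)_{≥ s} = {p ∈ Ass_R M : dim R/p ≥ s} is finite. -/

import Mathlib

open CategoryTheory

universe u

/-- Carrier of the `i`-th local cohomology module `H^i_a(M)` with support in `V(a)`. -/
noncomputable def locH (R : Type u) [CommRing R] (a : Ideal R) (i : ℕ)
    (M : Type u) [AddCommGroup M] [Module R M] : ModuleCat R :=
  (localCohomology a i).obj (ModuleCat.of R M)

/-- Krull dimension of the support of a module. -/
noncomputable def dimSupp (R : Type u) [CommRing R]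
    (M : Type u) [AddCommGroup M] [Module R M] : WithBot ℕ∞ :=
  Order.krullDim (Module.support R M)

/-- `f_a^b(M) = inf{i : b^n H^i_a(M) ≠ 0 for all n}`, the `b`-finiteness dimension
of `M` relative to `a` (`inf ∅ = ⊤`). -/
noncomputable def fab (R : Type u) [CommRing R] (a b : Ideal R)
    (M : Type u) [AddCommGroup M] [Module R M] : ℕ∞ :=
  sInf ((↑) '' {i : ℕ |
    ∀ n : ℕ, b ^ n • (⊤ : Submodule R (locH R a i M)) ≠ ⊥})

/-- `f_a^b(M)_n = inf{i : dim Supp (b^t H^i_a(M)) ≥ n for all t}`. -/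
noncomputable def fabn (R : Type u) [CommRing R] (a b : Ideal R)
    (M : Type u) [AddCommGroup M] [Module R M] (n : ℕ) : ℕ∞ :=
  sInf ((↑) '' {i : ℕ |
    ∀ t : ℕ, (n : WithBot ℕ∞) ≤ dimSupp R ↥(b ^ t • (⊤ : Submodule R (locH R a i M)))})

/-- `f_a^b(M)^n = inf{f_{aR_p}^{bR_p}(M_p) : p ∈ Spec R, dim R/p ≥ n}`. -/
noncomputable def fabUpper (R : Type u) [CommRing R] (a b : Ideal R)
    (M : Type u) [AddCommGroup M] [Module R M] (n : ℕ) : ℕ∞ :=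
  sInf {d : ℕ∞ | ∃ p : PrimeSpectrum R, (n : WithBot ℕ∞) ≤ ringKrullDim (R ⧸ p.asIdeal) ∧
    d = fab (Localization.AtPrime p.asIdeal)
      (a.map (algebraMap R (Localization.AtPrime p.asIdeal)))
      (b.map (algebraMap R (Localization.AtPrime p.asIdeal)))
      (LocalizedModule p.asIdeal.primeCompl M)}

/-- `f_a(M) = inf{i : H^i_a(M) is not finitely generated}`, the finiteness dimension. -/
noncomputable def finDim (R : Type u) [CommRing R] (a : Ideal R)
    (M : Type u) [AddCommGroup M] [Module R M] : ℕ∞ :=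
  sInf ((↑) '' {i : ℕ | ¬ Module.Finite R (locH R a i M)})

/-- The `i`-th Ext module `Ext^i_R(N, N')`. -/
noncomputable def extMod (R : Type u) [CommRing R] (i : ℕ)
    (N : Type u) [AddCommGroup N] [Module R N]
    (N' : Type u) [AddCommGroup N'] [Module R N'] : ModuleCat R :=
  ((Ext R (ModuleCat.{u} R) i).obj (Opposite.op (ModuleCat.of R N))).obj (ModuleCat.of R N')

/-- `N` is `b`-cofinite: `Supp N ⊆ V(b)` and `Ext^i_R(R/b, N)` is finitely
generated for all `i ≥ 0`. -/
def IsCofinite (R : Type u) [CommRing R] (b : Ideal R)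
    (N : Type u) [AddCommGroup N] [Module R N] : Prop :=
  Module.support R N ⊆ PrimeSpectrum.zeroLocus (b : Set R) ∧
    ∀ i : ℕ, Module.Finite R (extMod R i (R ⧸ b) N)

/-- `c_a^b(M) = inf{i : H^i_a(M) is not b-cofinite}`, the `b`-cofiniteness dimension. -/
noncomputable def cofDim (R : Type u) [CommRing R] (a b : Ideal R)
    (M : Type u) [AddCommGroup M] [Module R M] : ℕ∞ :=
  sInf ((↑) '' {i : ℕ | ¬ IsCofinite R b (locH R a i M)})

/-- `depth(b, M)`: the supremum of lengths of `M`-regular sequences contained in `b`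
(the common length of maximal `M`-regular sequences in `b`). -/
noncomputable def mdepth (R : Type u) [CommRing R] (b : Ideal R)
    (M : Type u) [AddCommGroup M] [Module R M] : ℕ∞ :=
  sSup {d : ℕ∞ | ∃ rs : List R, d = rs.length ∧ (∀ r ∈ rs, r ∈ b) ∧
    RingTheory.Sequence.IsRegular M rs}

/-- `f_a^n(M) = inf{f_{aR_p}(M_p) : p ∈ Supp(M/aM), dim R/p ≥ n}`. -/
noncomputable def fan (R : Type u) [CommRing R] (a : Ideal R)
    (M : Type u) [AddCommGroup M] [Module R M] (n : ℕ) : ℕ∞ :=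
  sInf {d : ℕ∞ | ∃ p : PrimeSpectrum R,
    p ∈ Module.support R (M ⧸ (a • ⊤ : Submodule R M)) ∧
    (n : WithBot ℕ∞) ≤ ringKrullDim (R ⧸ p.asIdeal) ∧
    d = finDim (Localization.AtPrime p.asIdeal)
      (a.map (algebraMap R (Localization.AtPrime p.asIdeal)))
      (LocalizedModule p.asIdeal.primeCompl M)}

/-- `M` is in dimension `< n`: there is a finitely generated submodule `N ⊆ M`
with `dim Supp (M/N) < n`. -/
def InDimLT (R : Type u) [CommRing R] (n : ℕ)
    (M : Type u) [AddCommGroup M] [Module R M] : Prop :=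
  ∃ N : Submodule R M, N.FG ∧ dimSupp R (M ⧸ N) < (n : WithBot ℕ∞)


section AuxAss

variable {R : Type u} [CommRing R] {M : Type u} [AddCommGroup M] [Module R M]

lemma aux_ass_iff [IsNoetherianRing R] {p : Ideal R} :
    IsAssociatedPrime p M ↔ p.IsPrime ∧ ∃ x : M, p = (Submodule.span R {x}).annihilator := by
  rw [isAssociatedPrime_iff]; simp only [Submodule.bot_colon']

lemma aux_ann_span_coe (N : Submodule R M) (y : ↥N) :
    (Submodule.span R {y}).annihilator = (Submodule.span R {(y : M)}).annihilator := by
  ext r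
  simp only [Submodule.mem_annihilator_span_singleton]
  constructor
  · intro h
    have : ((r • y : ↥N) : M) = 0 := by rw [h]; rfl
    simpa using this
  · intro h
    ext
    simpa using h

lemma aux_ann_smul {p : Ideal R} (hp : p.IsPrime) {x : M}
    (hx : p = (Submodule.span R {x}).annihilator) {c : R} (hc : c • x ≠ 0) :
    (Submodule.span R {c • x}).annihilator = p := by
  have hcp : c ∉ p := by
    intro hcmem
    exact hc ((Submodule.mem_annihilator_span_singleton x c).mp (hx ▸ hcmem))
  ext r
  rw [Submodule.mem_annihilator_span_singleton]
  constructor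
  · intro h
    have h2 : (r * c) • x = 0 := by rw [mul_smul]; exact h
    have hrc : r * c ∈ p := hx ▸ (Submodule.mem_annihilator_span_singleton x (r * c)).mpr h2
    rcases hp.mem_or_mem hrc with h' | h'
    · exact h'
    · exact absurd h' hcp
  · intro h
    have h2 : r • x = 0 := (Submodule.mem_annihilator_span_singleton x r).mp (hx ▸ h)
    rw [smul_comm, h2, smul_zero]

/-- `Ass M ⊆ Ass N ∪ Ass (M/N)`. -/
lemma aux_ass_subset_union [IsNoetherianRing R] (N : Submodule R M) :
    associatedPrimes R M ⊆ associatedPrimes R ↥N ∪ associatedPrimes R (M ⧸ N) := by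
  rintro p hpA
  obtain ⟨hp, x, hx⟩ := aux_ass_iff.mp hpA
  by_cases hcase : ∃ c : R, c • x ∈ N ∧ c • x ≠ 0
  · left
    obtain ⟨c, hcN, hc0⟩ := hcase
    refine aux_ass_iff.mpr ⟨hp, ⟨c • x, hcN⟩, ?_⟩
    rw [aux_ann_span_coe]
    exact (aux_ann_smul hp hx hc0).symm
  · right
    push_neg at hcase
    refine aux_ass_iff.mpr ⟨hp, N.mkQ x, ?_⟩
    ext r
    rw [hx, Submodule.mem_annihilator_span_singleton,
      Submodule.mem_annihilator_span_singleton]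
    have heq : r • N.mkQ x = N.mkQ (r • x) := (map_smul _ _ _).symm
    rw [heq, Submodule.mkQ_apply, Submodule.Quotient.mk_eq_zero]
    constructor
    · intro h; rw [h]; exact N.zero_mem
    · exact hcase r

/-- Associated primes of the cyclic module generated by `x` with `Ann(x) = p` prime. -/
lemma aux_ass_span_singleton [IsNoetherianRing R] {p : Ideal R} (hp : p.IsPrime) {x : M}
    (hx : p = (Submodule.span R {x}).annihilator) :
    associatedPrimes R ↥(Submodule.span R {x}) ⊆ {p} := by
  rintro q hqA
  obtain ⟨hq, y, hy⟩ := aux_ass_iff.mp hqA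
  obtain ⟨c, hc⟩ := Submodule.mem_span_singleton.mp y.2
  have hy0 : (y : M) ≠ 0 := by
    intro h0
    apply hq.ne_top
    have : y = 0 := Subtype.ext h0
    rw [hy, this, Submodule.span_singleton_eq_bot.mpr rfl, Submodule.annihilator_bot]
  rw [Set.mem_singleton_iff, hy, aux_ann_span_coe, ← hc]
  exact aux_ann_smul hp hx (hc ▸ hy0)

/-- Finiteness of associated primes of quotients of a Noetherian module. -/
lemma aux_ass_quot_finite [IsNoetherianRing R] [IsNoetherian R M]
    (K : Submodule R M) : (associatedPrimes R (M ⧸ K)).Finite := by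
  have wf : WellFounded ((· > ·) : Submodule R M → Submodule R M → Prop) :=
    (inferInstance : WellFoundedGT (Submodule R M)).wf
  induction K using wf.induction with
  | _ K IH =>
    rcases subsingleton_or_nontrivial (M ⧸ K) with hs | hn
    · rw [associatedPrimes.eq_empty_of_subsingleton]; exact Set.finite_empty
    · obtain ⟨p, hpA⟩ := associatedPrimes.nonempty R (M ⧸ K)
      obtain ⟨hp, xbar, hx⟩ := aux_ass_iff.mp hpA
      obtain ⟨x, rfl⟩ := K.mkQ_surjective xbar
      have hx0 : K.mkQ x ≠ 0 := by
        intro h0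
        apply hp.ne_top
        rw [hx, h0, Submodule.span_singleton_eq_bot.mpr rfl, Submodule.annihilator_bot]
      set N0 : Submodule R (M ⧸ K) := Submodule.span R {K.mkQ x} with hN0
      set K' : Submodule R M := Submodule.comap K.mkQ N0 with hK'
      have hKK' : K < K' := by
        constructor
        · intro a ha
          show K.mkQ a ∈ N0
          have : K.mkQ a = 0 := by
            rw [Submodule.mkQ_apply, Submodule.Quotient.mk_eq_zero]; exact ha
          rw [this]; exact N0.zero_mem
        · intro hle
          have hxK' : x ∈ K' := Submodule.mem_span_singleton_self _
          have : K.mkQ x = 0 := by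
            rw [Submodule.mkQ_apply, Submodule.Quotient.mk_eq_zero]
            exact hle hxK'
          exact hx0 this
      have hmap : K'.map K.mkQ = N0 :=
        Submodule.map_comap_eq_self (by rw [Submodule.range_mkQ]; exact le_top)
      have e : ((M ⧸ K) ⧸ (K'.map K.mkQ)) ≃ₗ[R] M ⧸ K' :=
        Submodule.quotientQuotientEquivQuotient K K' hKK'.le
      have hsub : associatedPrimes R (M ⧸ K) ⊆
          {p} ∪ associatedPrimes R (M ⧸ K') := by
        intro q hq
        rcases aux_ass_subset_union N0 hq with h | h
        · exact Or.inl (aux_ass_span_singleton hp hx h)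
        · right
          rw [← LinearEquiv.AssociatedPrimes.eq e, hmap]
          exact h
      exact ((Set.finite_singleton p).union (IH K' hKK')).subset hsub

lemma aux_ass_finite [IsNoetherianRing R] [IsNoetherian R M] :
    (associatedPrimes R M).Finite := by
  have e : (M ⧸ (⊥ : Submodule R M)) ≃ₗ[R] M := Submodule.quotEquivOfEqBot ⊥ rfl
  rw [← LinearEquiv.AssociatedPrimes.eq e]
  exact aux_ass_quot_finite ⊥

lemma aux_dim_le {p : Ideal R} {x : M}
    (hx : p = (Submodule.span R {x}).annihilator) :
    ringKrullDim (R ⧸ p) ≤ dimSupp R M := by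
  have hsupp : ∀ q : PrimeSpectrum (R ⧸ p),
      (PrimeSpectrum.comap (Ideal.Quotient.mk p)) q ∈ Module.support R M := by
    intro q
    rw [Module.mem_support_iff_exists_annihilator]
    refine ⟨x, ?_⟩
    rw [← hx]
    intro a ha
    show Ideal.Quotient.mk p a ∈ q.asIdeal
    rw [Ideal.Quotient.eq_zero_iff_mem.mpr ha]
    exact q.asIdeal.zero_mem
  let f : PrimeSpectrum (R ⧸ p) → ↥(Module.support R M) :=
    fun q => ⟨(PrimeSpectrum.comap (Ideal.Quotient.mk p)) q, hsupp q⟩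
  have hinj : Function.Injective f := by
    intro q q' h
    exact PrimeSpectrum.comap_injective_of_surjective _ Ideal.Quotient.mk_surjective
      (congrArg Subtype.val h)
  have hmono : Monotone f := by
    intro q q' hle
    exact Ideal.comap_mono hle
  exact Order.krullDim_le_of_strictMono f (hmono.strictMono_of_injective hinj)

end AuxAss

/-- if `M` is in dimension `< s`, then `(Ass_R M)_{≥ s}` is finite. -/
theorem assPrimes_ge_finite_of_inDimLT (R : Type u) [CommRing R] [IsNoetherianRing R]
    (M : Type u) [AddCommGroup M] [Module R M] (s : ℕ)
    (h : InDimLT R s M) :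
    {p ∈ associatedPrimes R M | (s : WithBot ℕ∞) ≤ ringKrullDim (R ⧸ p)}.Finite := by
  obtain ⟨N, hfg, hdim⟩ := h
  haveI : IsNoetherian R ↥N := isNoetherian_of_fg_of_noetherian N hfg
  apply (aux_ass_finite (R := R) (M := ↥N)).subset
  rintro p ⟨hpAss, hps⟩
  rcases aux_ass_subset_union N hpAss with h1 | h1
  · exact h1
  · exfalso
    obtain ⟨hp, x, hx⟩ := aux_ass_iff.mp h1
    exact absurd hdim (not_lt.mpr (hps.trans (aux_dim_le hx)))
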